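/- For every finite simple graph H there exists a routed network of conflict width at most two whose routes are indexed by the vertices of H, in which two distinct routes share an arc if and only if the corresponding vertices are adjacent in H, such that for every integer k ≥ 1 the network admits a (k,1)-periodic assignment if and only if H admits a proper vertex coloring with k colors. -/

import Mathlib

/-- The set of `τ` consecutive residues modulo `P` starting at `t`. -/
def slotSet (P τ : ℕ) (t : ℤ) : Set (ZMod P) :=
  {s | ∃ k : ℕ, k < τ ∧ s = ((t + k : ℤ) : ZMod P)}

/-- The arcs of a route: its pairs of consecutive vertices. -/
def arcs {V : Type*} (r : List V) : List (V × V) := r.zip r.tail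

/-- Latency of the `i`-th vertex of the route `r`: the sum of the weights of the
first `i` arcs of `r`. -/
def latency {V : Type*} (ω : V → V → ℕ) (r : List V) (i : ℕ) : ℕ :=
  (((arcs r).map fun p => ω p.1 p.2).take i).sum

/-- Two routes with given offsets collide if they share an arc `(u, v)` and
their slot sets at `u` intersect. -/
def Collide {V : Type*} (ω : V → V → ℕ) (P τ : ℕ)
    (r₁ r₂ : List V) (m₁ m₂ : ℤ) : Prop :=
  ∃ i j : ℕ, i + 1 < r₁.length ∧ j + 1 < r₂.length ∧
    r₁[i]? = r₂[j]? ∧ r₁[i + 1]? = r₂[j + 1]? ∧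
    (slotSet P τ (m₁ + latency ω r₁ i) ∩ slotSet P τ (m₂ + latency ω r₂ j)).Nonempty

/-- A `(P,τ)`-periodic assignment: offsets such that no two distinct routes collide. -/
def IsPeriodicAssignment {V ι : Type*} (ω : V → V → ℕ) (routes : ι → List V)
    (P τ : ℕ) (m : ι → ℤ) : Prop :=
  ∀ a b : ι, a ≠ b → ¬ Collide ω P τ (routes a) (routes b) (m a) (m b)

/- ### Auxiliary lemmas -/

lemma arcs_cons_cons {V : Type*} (a b : V) (t : List V) :
    arcs (a :: b :: t) = (a, b) :: arcs (b :: t) := rfl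

lemma mem_arcs_iff {V : Type*} {r : List V} {p : V × V} :
    p ∈ arcs r ↔ ∃ i, r[i]? = some p.1 ∧ r[i + 1]? = some p.2 := by
  induction r with
  | nil => simp [arcs]
  | cons a t ih =>
    cases t with
    | nil =>
      simp only [arcs, List.tail, List.zip_nil_right, List.not_mem_nil, false_iff,
        not_exists, not_and]
      intro i h1 h2
      cases i <;> simp_all
    | cons b t' =>
      rw [arcs_cons_cons]
      simp only [List.mem_cons, ih]
      constructor
      · rintro (rfl | ⟨i, h1, h2⟩)
        · exact ⟨0, rfl, rfl⟩
        · exact ⟨i + 1, h1, h2⟩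
      · rintro ⟨i, h1, h2⟩
        cases i with
        | zero =>
          left
          simp only [List.getElem?_cons_zero, List.getElem?_cons_succ] at h1 h2
          cases p
          simp_all
        | succ n => exact Or.inr ⟨n, h1, h2⟩

lemma ne_of_mem_arcs_nodup {V : Type*} {r : List V} (hr : r.Nodup) {p : V × V}
    (hp : p ∈ arcs r) : p.1 ≠ p.2 := by
  rw [mem_arcs_iff] at hp
  obtain ⟨i, h1, h2⟩ := hp
  intro he
  have hlen : i < r.length := by
    by_contra h
    rw [List.getElem?_eq_none (le_of_not_gt h)] at h1
    exact Option.some_ne_none _ h1.symm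
  have hx : r[i]? = r[i + 1]? := by rw [h1, h2, he]
  have := (List.getElem?_inj hlen hr).1
    hx
  omega

lemma latency_zero {V : Type*} (r : List V) (i : ℕ) :
    latency (fun _ _ => 0) r i = 0 := by
  apply List.sum_eq_zero
  intro x hx
  have := List.mem_map.1 (List.take_subset _ _ hx)
  obtain ⟨p, -, rfl⟩ := this
  rfl

lemma slotSet_one (P : ℕ) (t : ℤ) : slotSet P 1 t = {(t : ZMod P)} := by
  ext s
  simp only [slotSet, Set.mem_setOf_eq, Set.mem_singleton_iff]
  constructor
  · rintro ⟨k, hk, rfl⟩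
    interval_cases k
    push_cast
    ring_nf
  · rintro rfl
    exact ⟨0, by norm_num, by push_cast; ring_nf⟩

/-- For every finite simple graph `H` there is a routed network of conflict width
at most two, with routes indexed by the vertices of `H`, in which two distinct
routes share an arc exactly when the corresponding vertices are adjacent, and
which admits a `(k,1)`-periodic assignment exactly when `H` is properly
`k`-vertex-colorable. -/
theorem vertex_coloring_reduction {W : Type*} [Fintype W] [DecidableEq W]
    (H : SimpleGraph W) [DecidableRel H.Adj] :
    ∃ (V : Type) (_ : Fintype V) (routes : W → List V) (ω : V → V → ℕ),
      (∀ u : W, (routes u).Nodup) ∧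
      (∀ p : V × V, {u : W | p ∈ arcs (routes u)}.ncard ≤ 2) ∧
      (∀ u v : W, u ≠ v →
        ((∃ p : V × V, p ∈ arcs (routes u) ∧ p ∈ arcs (routes v)) ↔ H.Adj u v)) ∧
      (∀ k : ℕ, 1 ≤ k →
        ((∃ m : W → ℤ, IsPeriodicAssignment ω routes k 1 m) ↔
         (∃ f : W → Fin k, ∀ u v : W, H.Adj u v → f u ≠ f v))) := by
  classical
  set n := Fintype.card W with hn
  let e : W ≃ Fin n := Fintype.equivFin W
  set V : Type := Sym2 (Fin n) × Bool with hV
  -- the edge gadget label for the pair (u,v)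
  let E : W → W → Sym2 (Fin n) := fun u v => s(e u, e v)
  have hE : ∀ {u v u' v' : W}, E u v = E u' v' ↔ (u = u' ∧ v = v') ∨ (u = v' ∧ v = u') := by
    intro u v u' v'
    simp only [E, Sym2.eq_iff, EmbeddingLike.apply_eq_iff_eq]
  -- the block for edge (u,v) as traversed by route u
  let B : W → W → List V := fun u v => [(E u v, false), (E u v, true)]
  let nb : W → List W := fun u => (H.neighborFinset u).toList
  have hnb : ∀ u v, v ∈ nb u ↔ H.Adj u v := by
    intro u v; simp [nb]
  let routes : W → List V := fun u => (nb u).flatMap (B u)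
  -- characterization of arcs of a route
  have harcs : ∀ (u : W) (l : List W) (p : V × V),
      p ∈ arcs (l.flatMap (B u)) ↔
        (∃ v ∈ l, p = ((E u v, false), (E u v, true))) ∨
        (∃ q ∈ arcs l, p = ((E u q.1, true), (E u q.2, false))) := by
    intro u l
    induction l with
    | nil => simp [arcs]
    | cons v vs ih =>
      intro p
      cases vs with
      | nil =>
        simp only [List.flatMap_cons, List.flatMap_nil, List.append_nil]
        show p ∈ arcs [(E u v, false), (E u v, true)] ↔ _
        rw [arcs_cons_cons]
        simp [arcs]
      | cons w ws =>
        have hflat : ((v :: w :: ws).flatMap (B u)) =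
            (E u v, false) :: (E u v, true) :: ((w :: ws).flatMap (B u)) := by
          simp [B]
        have hflat2 : ((w :: ws).flatMap (B u)) =
            (E u w, false) :: (E u w, true) :: (ws.flatMap (B u)) := by
          simp [B]
        have key : arcs ((E u v, true) :: (w :: ws).flatMap (B u)) =
            ((E u v, true), (E u w, false)) :: arcs ((w :: ws).flatMap (B u)) := by
          rw [hflat2]
          simp [arcs_cons_cons]
        rw [hflat, arcs_cons_cons, key]
        simp only [List.mem_cons, ih p, arcs_cons_cons]
        constructor
        · rintro (rfl | (rfl | h))
          · exact Or.inl ⟨v, by simp⟩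
          · exact Or.inr ⟨(v, w), by simp⟩
          · rcases h with (⟨x, hx, rfl⟩ | ⟨q, hq, rfl⟩)
            · exact Or.inl ⟨x, by simp [hx]⟩
            · exact Or.inr ⟨q, by simp [hq]⟩
        · rintro (⟨x, hx, rfl⟩ | ⟨q, hq, rfl⟩)
          · rcases hx with rfl | hx
            · exact Or.inl rfl
            · exact Or.inr (Or.inr (Or.inl ⟨x, hx, rfl⟩))
          · rcases hq with rfl | hq
            · exact Or.inr (Or.inl rfl)
            · exact Or.inr (Or.inr (Or.inr ⟨q, hq, rfl⟩))
  have hnbnodup : ∀ u, (nb u).Nodup := fun u => Finset.nodup_toList _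
  -- membership in arcs forces u ∈ first Sym2 component
  have hmem_fst : ∀ (u : W) (p : V × V), p ∈ arcs (routes u) → e u ∈ p.1.1 := by
    intro u p hp
    rcases (harcs u (nb u) p).1 hp with ⟨v, _, rfl⟩ | ⟨q, _, rfl⟩
    · exact Sym2.mem_mk_left _ _
    · exact Sym2.mem_mk_left _ _
  -- nodup of routes
  have hnodup : ∀ u, (routes u).Nodup := by
    intro u
    rw [List.nodup_flatMap]
    constructor
    · intro v _
      have hne : ((E u v, false) : V) ≠ (E u v, true) :=
        fun h => Bool.noConfusion (congrArg Prod.snd h)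
      simp [B, hne]
    · refine (hnbnodup u).imp ?_
      intro a b hab x hx hx'
      simp only [B, List.mem_cons, List.not_mem_nil, or_false] at hx hx'
      have ha : x.1 = E u a := by rcases hx with rfl | rfl <;> rfl
      have hb : x.1 = E u b := by rcases hx' with rfl | rfl <;> rfl
      rcases hE.1 (ha.symm.trans hb) with ⟨-, h⟩ | ⟨h1, h2⟩
      · exact hab h
      · exact hab (h2.trans h1)
  -- shared arc iff adjacent
  have hshare : ∀ u v : W, u ≠ v →
      ((∃ p : V × V, p ∈ arcs (routes u) ∧ p ∈ arcs (routes v)) ↔ H.Adj u v) := by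
    intro u v huv
    constructor
    · rintro ⟨p, hpu, hpv⟩
      rcases (harcs u (nb u) p).1 hpu with ⟨a, ha, rfl⟩ | ⟨q, hq, rfl⟩ <;>
        rcases (harcs v (nb v) _).1 hpv with ⟨b, hb, hpe⟩ | ⟨q', hq', hpe⟩
      · -- both gadget arcs
        have heq : E u a = E v b := by
          have := congrArg (fun x => x.1.1) hpe; simpa using this
        rcases hE.1 heq with ⟨huv', -⟩ | ⟨-, hav⟩
        · exact absurd huv' huv
        · exact hav ▸ (hnb u a).1 ha
      · simp [Prod.ext_iff] at hpe
      · simp [Prod.ext_iff] at hpe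
      · -- both junction arcs
        exfalso
        have h1 : E u q.1 = E v q'.1 := by
          have := congrArg (fun x => x.1.1) hpe; simpa using this
        have h2 : E u q.2 = E v q'.2 := by
          have := congrArg (fun x => x.2.1) hpe; simpa using this
        have hq1 : q.1 = v := by
          rcases hE.1 h1 with ⟨h, -⟩ | ⟨-, h⟩
          · exact absurd h huv
          · exact h
        have hq2 : q.2 = v := by
          rcases hE.1 h2 with ⟨h, -⟩ | ⟨-, h⟩
          · exact absurd h huv
          · exact h
        exact ne_of_mem_arcs_nodup (hnbnodup u) hq (hq1.trans hq2.symm)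
    · intro hadj
      refine ⟨((E u v, false), (E u v, true)), ?_, ?_⟩
      · exact (harcs u (nb u) _).2 (Or.inl ⟨v, (hnb u v).2 hadj, rfl⟩)
      · refine (harcs v (nb v) _).2 (Or.inl ⟨u, (hnb v u).2 hadj.symm, ?_⟩)
        have : E v u = E u v := by simp [E, Sym2.eq_swap]
        rw [this]
  refine ⟨V, inferInstance, routes, fun _ _ => 0, hnodup, ?_, hshare, ?_⟩
  · -- conflict width at most 2
    intro p
    have hsub : {u : W | p ∈ arcs (routes u)} ⊆ {u : W | e u ∈ p.1.1} :=
      fun u hu => hmem_fst u p hu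
    obtain ⟨x, y, hxy⟩ : ∃ x y, p.1.1 = s(x, y) :=
      ⟨p.1.1.out.1, p.1.1.out.2, by exact (Quot.out_eq _).symm⟩
    rw [hxy] at hsub
    ·
      have hsub2 : {u : W | e u ∈ s(x, y)} ⊆ {e.symm x, e.symm y} := by
        intro u hu
        rcases Sym2.mem_iff.1 hu with h | h <;>
          simp [← h, Set.mem_insert_iff]
      calc {u : W | p ∈ arcs (routes u)}.ncard
          ≤ ({e.symm x, e.symm y} : Set W).ncard :=
            Set.ncard_le_ncard (hsub.trans hsub2) (Set.toFinite _)
        _ ≤ 2 := by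
            apply le_trans (Set.ncard_insert_le _ _)
            simp [Set.ncard_singleton]
  · -- coloring equivalence
    intro k hk
    haveI : NeZero k := ⟨by omega⟩
    constructor
    · rintro ⟨m, hm⟩
      refine ⟨fun u => ⟨((m u : ZMod k)).val, ZMod.val_lt _⟩, ?_⟩
      intro u v hadj hfe
      have huv : u ≠ v := H.ne_of_adj hadj
      have hzm : ((m u : ZMod k)) = ((m v : ZMod k)) :=
        ZMod.val_injective k (by simpa using congrArg Fin.val hfe)
      apply hm u v huv
      obtain ⟨p, hpu, hpv⟩ := (hshare u v huv).2 hadj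
      obtain ⟨i, hi1, hi2⟩ := mem_arcs_iff.1 hpu
      obtain ⟨j, hj1, hj2⟩ := mem_arcs_iff.1 hpv
      have hil : i + 1 < (routes u).length := (List.getElem?_eq_some_iff.1 hi2).1
      have hjl : j + 1 < (routes v).length := (List.getElem?_eq_some_iff.1 hj2).1
      refine ⟨i, j, hil, hjl, ?_, ?_, ?_⟩
      · rw [hi1, hj1]
      · rw [hi2, hj2]
      · rw [latency_zero, latency_zero]
        refine ⟨((m u : ZMod k)), ?_, ?_⟩ <;>
          simp [slotSet_one, hzm]
    · rintro ⟨f, hf⟩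
      refine ⟨fun u => ((f u : ℕ) : ℤ), ?_⟩
      intro u v huv hc
      obtain ⟨i, j, hi, hj, h1, h2, hne⟩ := hc
      -- extract the shared arc
      obtain ⟨x, hx⟩ : ∃ x, (routes u)[i]? = some x :=
        ⟨(routes u).get ⟨i, Nat.lt_of_succ_lt hi⟩, List.getElem?_eq_getElem (Nat.lt_of_succ_lt hi)⟩
      obtain ⟨y, hy⟩ : ∃ y, (routes u)[i + 1]? = some y :=
        ⟨(routes u).get ⟨i + 1, hi⟩, List.getElem?_eq_getElem hi⟩
      have hpu : (x, y) ∈ arcs (routes u) := mem_arcs_iff.2 ⟨i, hx, hy⟩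
      have hpv : (x, y) ∈ arcs (routes v) :=
        mem_arcs_iff.2 ⟨j, by rw [← h1, hx], by rw [← h2, hy]⟩
      have hadj : H.Adj u v := (hshare u v huv).1 ⟨(x, y), hpu, hpv⟩
      rw [latency_zero, latency_zero] at hne
      obtain ⟨s, hs1, hs2⟩ := hne
      rw [slotSet_one] at hs1 hs2
      have : (((f u : ℕ) : ℤ) : ZMod k) = (((f v : ℕ) : ℤ) : ZMod k) := by
        simpa using hs1.symm.trans hs2
      apply hf u v hadj
      have hval : ((f u : ℕ) : ZMod k).val = ((f v : ℕ) : ZMod k).val := by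
        rw [show (((f u : ℕ)) : ZMod k) = (((f v : ℕ)) : ZMod k) by exact_mod_cast this]
      rw [ZMod.val_cast_of_lt (f u).isLt, ZMod.val_cast_of_lt (f v).isLt] at hval
      exact Fin.ext hval
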